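/- Let w_1,…,w_n > 0, Λ_w = diag(w_1,…,w_n), and let κ_1,…,κ_n denote the eigenvalues of Λ_w C Λ_w. The matrix A_* = Λ_σ^{-1} Λ_w (Λ_w C Λ_w)^{-1/2} satisfies A_*ᵀ Σ A_* = I_n (i.e. A_* ∈ 𝒜) and tr(A_*ᵀ Λ_σ C Λ_w) = Σ_{i=1}^n κ_i^{1/2}. -/

import Mathlib

open Matrix BigOperators

lemma trace_sqrt_aux {n : ℕ} {A : Matrix (Fin n) (Fin n) ℝ} (hA : A.PosSemidef) :
    (hA.1.eigenvectorUnitary * Matrix.diagonal (((↑) : ℝ → ℝ) ∘ (Real.sqrt ·) ∘ hA.1.eigenvalues) *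
      (star hA.1.eigenvectorUnitary : Matrix (Fin n) (Fin n) ℝ)).trace = ∑ i, Real.sqrt (hA.1.eigenvalues i) := by
  rw [Matrix.trace_mul_cycle,
    (Matrix.mem_unitaryGroup_iff').mp (hA.1.eigenvectorUnitary).2, Matrix.one_mul]
  simp [Matrix.trace_diagonal]

/-- **Weighted OASIS attainment.** The matrix `A_* = Λ_σ⁻¹ Λ_w (Λ_w C Λ_w)^{-1/2}`
belongs to `𝒜` (i.e. `A_*ᵀ Σ A_* = I`) and attains the value
`tr(A_*ᵀ Λ_σ C Λ_w) = Σ_i κ_i^{1/2}`, where `κ_i` are the eigenvalues of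
`Λ_w C Λ_w`. -/
theorem stmt_1 {n : ℕ} (hn : 1 ≤ n)
    (S : Matrix (Fin n) (Fin n) ℝ) (hS : S.PosDef)
    (Ls : Matrix (Fin n) (Fin n) ℝ)
    (hLs : Ls = Matrix.diagonal (fun i => Real.sqrt (S i i)))
    (C : Matrix (Fin n) (Fin n) ℝ) (hC : C = Ls⁻¹ * S * Ls⁻¹)
    (w : Fin n → ℝ) (hw : ∀ i, 0 < w i)
    (Lw : Matrix (Fin n) (Fin n) ℝ) (hLw : Lw = Matrix.diagonal w)
    (hK : (Lw * C * Lw).PosDef)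
    (Astar : Matrix (Fin n) (Fin n) ℝ)
    (hAstar : Astar = Ls⁻¹ * Lw * (hK.posSemidef.1.eigenvectorUnitary * Matrix.diagonal (((↑) : ℝ → ℝ) ∘ (Real.sqrt ·) ∘ hK.posSemidef.1.eigenvalues) *
      (star hK.posSemidef.1.eigenvectorUnitary : Matrix (Fin n) (Fin n) ℝ))⁻¹) :
    Astarᵀ * S * Astar = 1 ∧
    (Astarᵀ * Ls * C * Lw).trace = ∑ i, Real.sqrt (hK.1.eigenvalues i) := by
  have hdiag : ∀ i, 0 < S i i := by
    intro i
    exact hS.diag_pos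
  set Q := (hK.posSemidef.1.eigenvectorUnitary * Matrix.diagonal (((↑) : ℝ → ℝ) ∘ (Real.sqrt ·) ∘ hK.posSemidef.1.eigenvalues) *
      (star hK.posSemidef.1.eigenvectorUnitary : Matrix (Fin n) (Fin n) ℝ)) with hQ
  have hQsym : Qᵀ = Q := by
    have h := Matrix.isHermitian_mul_mul_conjTranspose (hK.posSemidef.1.eigenvectorUnitary : Matrix (Fin n) (Fin n) ℝ)
      (Matrix.isHermitian_diagonal (((↑) : ℝ → ℝ) ∘ (Real.sqrt ·) ∘ hK.posSemidef.1.eigenvalues))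
    rw [Matrix.IsHermitian, Matrix.conjTranspose_eq_transpose_of_trivial] at h
    exact h
  have hQQ : Q * Q = Lw * C * Lw := by
    have hU := (Matrix.mem_unitaryGroup_iff').mp (hK.posSemidef.1.eigenvectorUnitary).2
    have hsp := hK.posSemidef.1.spectral_theorem
    rw [hQ]
    calc _ = (hK.posSemidef.1.eigenvectorUnitary : Matrix (Fin n) (Fin n) ℝ) * (Matrix.diagonal (((↑) : ℝ → ℝ) ∘ (Real.sqrt ·) ∘ hK.posSemidef.1.eigenvalues) *
          ((star hK.posSemidef.1.eigenvectorUnitary : Matrix (Fin n) (Fin n) ℝ) * (hK.posSemidef.1.eigenvectorUnitary : Matrix (Fin n) (Fin n) ℝ)) *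
          Matrix.diagonal (((↑) : ℝ → ℝ) ∘ (Real.sqrt ·) ∘ hK.posSemidef.1.eigenvalues)) *
          (star hK.posSemidef.1.eigenvectorUnitary : Matrix (Fin n) (Fin n) ℝ) := by
          simp only [Matrix.mul_assoc]
      _ = _ := by
          rw [hU, Matrix.mul_one, Matrix.diagonal_mul_diagonal]
          conv_rhs => rw [hsp]
          simp only [Unitary.conjStarAlgAut_apply, Matrix.mul_assoc]
          congr 2
          congr 1
          funext i
          simp [Real.mul_self_sqrt (hK.posSemidef.eigenvalues_nonneg i)]
  -- invertibility of Q
  have hdetK : IsUnit (Lw * C * Lw).det := (Matrix.isUnit_iff_isUnit_det _).mp hK.isUnit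
  have hdetQ : IsUnit Q.det := by
    have : Q.det * Q.det = (Lw * C * Lw).det := by rw [← Matrix.det_mul, hQQ]
    exact isUnit_of_mul_isUnit_left (this ▸ hdetK)
  have hQiQ : Q⁻¹ * Q = 1 := Matrix.nonsing_inv_mul _ hdetQ
  have hQQi : Q * Q⁻¹ = 1 := Matrix.mul_nonsing_inv _ hdetQ
  -- invertibility of Ls
  have hdetLs : IsUnit Ls.det := by
    rw [hLs, Matrix.det_diagonal]
    refine isUnit_iff_ne_zero.mpr (Finset.prod_ne_zero_iff.mpr fun i _ => ?_)
    exact ne_of_gt (Real.sqrt_pos.mpr (hdiag i))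
  have hLsiLs : Ls⁻¹ * Ls = 1 := Matrix.nonsing_inv_mul _ hdetLs
  -- symmetry of diagonal matrices
  have hLwT : Lwᵀ = Lw := by rw [hLw, Matrix.diagonal_transpose]
  have hLsiT : (Ls⁻¹)ᵀ = Ls⁻¹ := by
    rw [Matrix.transpose_nonsing_inv, hLs, Matrix.diagonal_transpose]
  have hAT : Astarᵀ = Q⁻¹ * Lw * Ls⁻¹ := by
    rw [hAstar, Matrix.transpose_mul, Matrix.transpose_mul, Matrix.transpose_nonsing_inv,
      hQsym, hLwT, hLsiT, Matrix.mul_assoc]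
  constructor
  · calc Astarᵀ * S * Astar
        = Q⁻¹ * (Lw * (Ls⁻¹ * S * Ls⁻¹) * Lw) * Q⁻¹ := by
          rw [hAT, hAstar]; noncomm_ring
      _ = Q⁻¹ * (Q * Q) * Q⁻¹ := by rw [← hC, ← hQQ]
      _ = 1 := by rw [← Matrix.mul_assoc, hQiQ, Matrix.one_mul, hQQi]
  · have h2 : Astarᵀ * Ls * C * Lw = Q := by
      calc Astarᵀ * Ls * C * Lw
          = Q⁻¹ * Lw * (Ls⁻¹ * Ls) * C * Lw := by rw [hAT]; noncomm_ring
        _ = Q⁻¹ * (Lw * C * Lw) := by rw [hLsiLs]; noncomm_ring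
        _ = Q⁻¹ * (Q * Q) := by rw [← hQQ]
        _ = Q := by rw [← Matrix.mul_assoc, hQiQ, Matrix.one_mul]
    rw [h2]
    exact trace_sqrt_aux hK.posSemidef
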